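/- Under hypotheses (A1) and (A2), for every u ∈ S^{d-1} ∩ C and k ∈ ℤ^d ∩ C, there is a neighborhood V_u of r(u) = (e^{α_1(u)},…,e^{α_d(u)}) in ℝ^d such that the series F_k(x) = Σ_{m∈ℤ^d∖C} P_k(Z(τ)=m, τ<∞) x^m converges absolutely for all x ∈ ℂ^d with (|x_1|,…,|x_d|) ∈ V_u; hence F_k extends analytically to this multicircular set. -/

import Mathlib

open scoped BigOperators RealInnerProductSpace
open Filter MeasureTheory Classical

attribute [local instance] Classical.propDecidable

noncomputable section

abbrev V (d : ℕ) := EuclideanSpace ℝ (Fin d)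
abbrev Zd (d : ℕ) := Fin d → ℤ

/-- Embedding of lattice points into ℝ^d. -/
def toV {d : ℕ} (m : Zd d) : V d := WithLp.toLp 2 (fun i => (m i : ℝ))

/-- Scalar product α·m of a real vector with a lattice point. -/
def dotZ {d : ℕ} (α : V d) (m : Zd d) : ℝ := ∑ i, α i * (m i : ℝ)

/-- n-step transition probability P_0(Z(n) = m) of the homogeneous walk with step law μ. -/
def stepProb {d : ℕ} (μ : Zd d → ℝ) : ℕ → Zd d → ℝ
  | 0 => fun m => if m = 0 then 1 else 0
  | n + 1 => fun m => ∑' j : Zd d, stepProb μ n j * μ (m - j)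

/-- P_k(Z(n) = m, τ > n) for the walk killed at the first exit from C. -/
def killedProb {d : ℕ} (μ : Zd d → ℝ) (C : Set (V d)) (k : Zd d) : ℕ → Zd d → ℝ
  | 0 => fun m => if m = k ∧ toV m ∈ C then 1 else 0
  | n + 1 => fun m =>
      if toV m ∈ C then ∑' j : Zd d, killedProb μ C k n j * μ (m - j) else 0

/-- P_k(Z(τ) = m, τ = n). -/
def exitProb {d : ℕ} (μ : Zd d → ℝ) (C : Set (V d)) (k : Zd d) : ℕ → Zd d → ℝ
  | 0 => fun m => if m = k ∧ toV m ∉ C then 1 else 0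
  | n + 1 => fun m =>
      if toV m ∉ C then ∑' j : Zd d, killedProb μ C k n j * μ (m - j) else 0

/-- P_k(Z(τ) = m, τ < ∞). -/
def exitTotal {d : ℕ} (μ : Zd d → ℝ) (C : Set (V d)) (k m : Zd d) : ℝ :=
  ∑' n : ℕ, exitProb μ C k n m

/-- Green function G_C(k,m) of the walk killed at the exit from C. -/
def GreenC {d : ℕ} (μ : Zd d → ℝ) (C : Set (V d)) (k m : Zd d) : ℝ :=
  ∑' n : ℕ, killedProb μ C k n m

/-- Green function of the free walk. -/
def Green {d : ℕ} (μ : Zd d → ℝ) (k m : Zd d) : ℝ :=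
  ∑' n : ℕ, stepProb μ n (m - k)

/-- Monomial x^m = x₁^{m₁}⋯x_d^{m_d} for x ∈ ℂ^d, m ∈ ℤ^d. -/
def cpow {d : ℕ} (x : Fin d → ℂ) (m : Zd d) : ℂ := ∏ i, x i ^ (m i)

/-- Monomial r^m for r ∈ ℝ^d, m ∈ ℤ^d. -/
def rpowZ {d : ℕ} (r : Fin d → ℝ) (m : Zd d) : ℝ := ∏ i, r i ^ (m i)

/-- Multivariate generating function 𝒫(x) = Σ_k μ(k) x^k. -/
def calP {d : ℕ} (μ : Zd d → ℝ) (x : Fin d → ℂ) : ℂ := ∑' k : Zd d, (μ k : ℂ) * cpow x k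

/-- Real version of the generating function on (0,∞)^d. -/
def calPR {d : ℕ} (μ : Zd d → ℝ) (r : Fin d → ℝ) : ℝ := ∑' k : Zd d, μ k * rpowZ r k

/-- Jump generating function P(α) = Σ_k e^{α·k} μ(k). -/
def Pgen {d : ℕ} (μ : Zd d → ℝ) (α : V d) : ℝ := ∑' k : Zd d, μ k * Real.exp (dotZ α k)

/-- The set D = {α : P(α) ≤ 1}. -/
def Dset {d : ℕ} (μ : Zd d → ℝ) : Set (V d) := {α | Pgen μ α ≤ 1}

/-- μ is a probability measure on ℤ^d. -/
def IsProb {d : ℕ} (μ : Zd d → ℝ) : Prop := (∀ k, 0 ≤ μ k) ∧ HasSum μ 1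

/-- Irreducibility of the walk in ℤ^d: every point is reachable from 0. -/
def IrreducibleWalk {d : ℕ} (μ : Zd d → ℝ) : Prop := ∀ m : Zd d, ∃ n, 0 < stepProb μ n m

/-- P is finite on a neighborhood of D. -/
def FiniteNearD {d : ℕ} (μ : Zd d → ℝ) : Prop :=
  ∃ U : Set (V d), IsOpen U ∧ Dset μ ⊆ U ∧
    ∀ α ∈ U, Summable (fun k : Zd d => μ k * Real.exp (dotZ α k))

/-- The mean jump Σ_k k μ(k) is nonzero. -/
def NonzeroMean {d : ℕ} (μ : Zd d → ℝ) : Prop :=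
  ∃ i : Fin d, (∑' k : Zd d, (k i : ℝ) * μ k) ≠ 0

/-- Hypotheses (A1). -/
def A1 {d : ℕ} (μ : Zd d → ℝ) : Prop :=
  IsProb μ ∧ IrreducibleWalk μ ∧ FiniteNearD μ ∧ NonzeroMean μ

/-- C is an open cone with vertex 0. -/
def IsOpenCone {d : ℕ} (C : Set (V d)) : Prop :=
  IsOpen C ∧ ∀ x ∈ C, ∀ c : ℝ, 0 < c → c • x ∈ C

/-- Hypothesis (A2): irreducibility of the killed walk on ℤ^d ∩ C. -/
def A2 {d : ℕ} (μ : Zd d → ℝ) (C : Set (V d)) : Prop :=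
  ∀ k m : Zd d, toV k ∈ C → toV m ∈ C → ∃ n, 0 < killedProb μ C k n m

/-- The harmonic function h_α(k) = e^{α·k} − E_k(e^{α·Z(τ)}; τ<∞). -/
def hFun {d : ℕ} (μ : Zd d → ℝ) (C : Set (V d)) (α : V d) (k : Zd d) : ℝ :=
  Real.exp (dotZ α k) - ∑' m : Zd d, exitTotal μ C k m * Real.exp (dotZ α m)

/-- α ↦ α·u attains its maximum over D at αu. -/
def IsMaxOn' {d : ℕ} (μ : Zd d → ℝ) (u αu : V d) : Prop :=
  αu ∈ Dset μ ∧ ∀ β ∈ Dset μ, ⟪β, u⟫ ≤ ⟪αu, u⟫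

/-- The generating function H_k(x) = Σ_{m ∈ ℤ^d∩C} G_C(k,m) x^m. -/
def Hfun {d : ℕ} (μ : Zd d → ℝ) (C : Set (V d)) (k : Zd d) (x : Fin d → ℂ) : ℂ :=
  ∑' m : Zd d, if toV m ∈ C then (GreenC μ C k m : ℂ) * cpow x m else 0

/-- The generating function F_k(x) = Σ_{m ∈ ℤ^d∖C} P_k(Z(τ)=m, τ<∞) x^m. -/
def Ffun {d : ℕ} (μ : Zd d → ℝ) (C : Set (V d)) (k : Zd d) (x : Fin d → ℂ) : ℂ :=
  ∑' m : Zd d, if toV m ∉ C then (exitTotal μ C k m : ℂ) * cpow x m else 0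


section AuxStatement8
set_option synthInstance.maxHeartbeats 1000000
variable {d : ℕ}


lemma dotZ_eq_inner (β : V d) (m : Zd d) : dotZ β m = ⟪β, toV m⟫ := by
  simp [dotZ, toV, PiLp.inner_apply, RCLike.inner_apply, mul_comm]

lemma dotZ_sub_right (β : V d) (m j : Zd d) : dotZ β (m - j) = dotZ β m - dotZ β j := by
  simp [dotZ, mul_sub, Finset.sum_sub_distrib]

lemma dotZ_zero_left (m : Zd d) : dotZ (0 : V d) m = 0 := by
  simp [dotZ]

lemma dotZ_sub_left (β γ : V d) (m : Zd d) : dotZ (β - γ) m = dotZ β m - dotZ γ m := by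
  simp [dotZ, sub_mul, Finset.sum_sub_distrib]

lemma dotZ_add_left (β γ : V d) (m : Zd d) : dotZ (β + γ) m = dotZ β m + dotZ γ m := by
  simp [dotZ, add_mul, Finset.sum_add_distrib]

lemma toV_eq_zero_iff (m : Zd d) : toV m = 0 ↔ m = 0 := by
  constructor
  · intro h; funext i
    have := congrArg (fun v : V d => v i) h
    simpa [toV] using this
  · rintro rfl; ext i; simp [toV]

lemma coord_abs_le_norm (y : V d) (i : Fin d) : |y i| ≤ ‖y‖ := by
  rw [EuclideanSpace.norm_eq]
  have : |y i| = Real.sqrt (‖y i‖ ^ 2) := by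
    rw [Real.sqrt_sq_eq_abs]; simp
  rw [this]
  apply Real.sqrt_le_sqrt
  have : ‖y i‖ ^ 2 = ∑ j ∈ {i}, ‖y j‖ ^ 2 := by simp
  rw [this]
  exact Finset.sum_le_sum_of_subset_of_nonneg (Finset.subset_univ _) (by intros; positivity)

lemma norm_le_sum_abs (y : V d) : ‖y‖ ≤ ∑ i, |y i| := by
  rw [EuclideanSpace.norm_eq]
  have h1 : ∑ i, ‖y i‖ ^ 2 ≤ (∑ i, |y i|) ^ 2 := by
    have h := Finset.sum_sq_le_sq_sum_of_nonneg (s := Finset.univ) (f := fun i => abs (y i))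
      (fun i _ => abs_nonneg _)
    simpa using h
  calc √(∑ i, ‖y i‖ ^ 2) ≤ √((∑ i, |y i|) ^ 2) := Real.sqrt_le_sqrt h1
  _ = ∑ i, |y i| := by
      rw [Real.sqrt_sq (Finset.sum_nonneg fun i _ => abs_nonneg _)]


section B2
variable {μ : Zd d → ℝ} {C : Set (V d)} {k : Zd d}

lemma mu_le_one (h : IsProb μ) (j : Zd d) : μ j ≤ 1 := by
  have h2 := h.2.summable.le_tsum j (fun b _ => h.1 b)
  rwa [h.2.tsum_eq] at h2

lemma summable_mu_exp (hA1 : A1 μ) (β : V d) :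
    Summable (fun j : Zd d => μ j * Real.exp (dotZ β j)) := by
  by_contra h
  have hD : β ∈ Dset μ := by
    simp only [Dset, Set.mem_setOf_eq, Pgen, tsum_eq_zero_of_not_summable h]; norm_num
  obtain ⟨U, _, hDU, hU⟩ := hA1.2.2.1
  exact h (hU β (hDU hD))

lemma killed_nonneg (h0 : ∀ j, 0 ≤ μ j) : ∀ n m, 0 ≤ killedProb μ C k n m := by
  intro n
  induction n with
  | zero =>
      intro m; simp only [killedProb]; split <;> norm_num
  | succ n ih =>
      intro m; simp only [killedProb]; split
      · exact tsum_nonneg fun j => mul_nonneg (ih j) (h0 _)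
      · exact le_rfl

lemma exit_nonneg (h0 : ∀ j, 0 ≤ μ j) : ∀ n m, 0 ≤ exitProb μ C k n m := by
  intro n
  cases n with
  | zero => intro m; simp only [exitProb]; split <;> norm_num
  | succ n =>
      intro m; simp only [exitProb]; split
      · exact tsum_nonneg fun j => mul_nonneg (killed_nonneg h0 n j) (h0 _)
      · exact le_rfl

lemma exitTotal_nonneg (h0 : ∀ j, 0 ≤ μ j) (m : Zd d) : 0 ≤ exitTotal μ C k m :=
  tsum_nonneg fun n => exit_nonneg h0 n m

lemma inner_summable (h : IsProb μ) (h0 : ∀ j, 0 ≤ μ j)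
    (hsum : Summable (killedProb μ C k n)) (m : Zd d) :
    Summable (fun j : Zd d => killedProb μ C k n j * μ (m - j)) :=
  Summable.of_nonneg_of_le (fun j => mul_nonneg (killed_nonneg h0 n j) (h0 _))
    (fun j => mul_le_of_le_one_right (killed_nonneg h0 n j) (mu_le_one h _)) hsum

lemma ofReal_mu_shift (h : IsProb μ) (j : Zd d) :
    ∑' m : Zd d, ENNReal.ofReal (μ (m - j)) = 1 := by
  have he := Equiv.tsum_eq (Equiv.subRight j) (fun s : Zd d => ENNReal.ofReal (μ s))
  have : ∑' m : Zd d, ENNReal.ofReal (μ (m - j)) = ∑' s : Zd d, ENNReal.ofReal (μ s) := he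
  rw [this, ← ENNReal.ofReal_tsum_of_nonneg h.1 h.2.summable, h.2.tsum_eq,
    ENNReal.ofReal_one]

lemma killed_summable (hA1 : A1 μ) :
    ∀ n, Summable (killedProb μ C k n) ∧
      ∑' m : Zd d, ENNReal.ofReal (killedProb μ C k n m) ≤ 1 := by
  have h0 := hA1.1.1
  intro n
  induction n with
  | zero =>
      constructor
      · apply summable_of_ne_finset_zero (s := {k})
        intro m hm
        simp only [Finset.mem_singleton] at hm
        simp only [killedProb]
        rw [if_neg]; rintro ⟨rfl, -⟩; exact hm rfl
      · have hle : ∀ m : Zd d, ENNReal.ofReal (killedProb μ C k 0 m) ≤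
            (fun m' : Zd d => if m' = k then (1 : ENNReal) else 0) m := by
          intro m
          simp only [killedProb]
          by_cases hmk : m = k
          · subst hmk; simp only [if_pos rfl]
            split <;> simp [ENNReal.ofReal_le_one]
          · rw [if_neg hmk, if_neg]
            · simp
            · rintro ⟨rfl, -⟩; exact hmk rfl
        calc ∑' m : Zd d, ENNReal.ofReal (killedProb μ C k 0 m)
            ≤ ∑' m : Zd d, (fun m' : Zd d => if m' = k then (1 : ENNReal) else 0) m :=
              ENNReal.tsum_le_tsum hle
          _ = 1 := by rw [tsum_eq_single k] <;> simp +contextual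
  | succ n ih =>
      have hstep : ∑' m : Zd d, ENNReal.ofReal (killedProb μ C k (n+1) m) ≤ 1 := by
        have hle : ∀ m : Zd d, ENNReal.ofReal (killedProb μ C k (n+1) m) ≤
            ∑' j : Zd d, ENNReal.ofReal (killedProb μ C k n j * μ (m - j)) := by
          intro m
          simp only [killedProb]
          split
          · rw [ENNReal.ofReal_tsum_of_nonneg
              (fun j => mul_nonneg (killed_nonneg h0 n j) (h0 _))
              (inner_summable hA1.1 h0 ih.1 m)]
          · simp
        calc ∑' m : Zd d, ENNReal.ofReal (killedProb μ C k (n+1) m)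
            ≤ ∑' m : Zd d, ∑' j : Zd d, ENNReal.ofReal (killedProb μ C k n j * μ (m - j)) :=
              ENNReal.tsum_le_tsum hle
          _ = ∑' j : Zd d, ∑' m : Zd d, ENNReal.ofReal (killedProb μ C k n j * μ (m - j)) :=
              ENNReal.tsum_comm
          _ = ∑' j : Zd d, ENNReal.ofReal (killedProb μ C k n j) *
                ∑' m : Zd d, ENNReal.ofReal (μ (m - j)) := by
              congr 1; funext j
              rw [← ENNReal.tsum_mul_left]
              congr 1; funext m
              rw [← ENNReal.ofReal_mul (killed_nonneg h0 n j)]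
          _ = ∑' j : Zd d, ENNReal.ofReal (killedProb μ C k n j) := by
              congr 1; funext j
              rw [ofReal_mu_shift hA1.1, mul_one]
          _ ≤ 1 := ih.2
      refine ⟨?_, hstep⟩
      have hne : ∑' m : Zd d, ENNReal.ofReal (killedProb μ C k (n+1) m) ≠ ⊤ :=
        fun h => by simp [h] at hstep
      have hs := ENNReal.summable_toReal hne
      refine hs.congr fun m => ?_
      exact ENNReal.toReal_ofReal (killed_nonneg h0 (n+1) m)

/-- W_n(β) = Σ_m P(Z_n = m, τ>n) e^{β·m} in ℝ≥0∞. -/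
def Wfun (μ : Zd d → ℝ) (C : Set (V d)) (k : Zd d) (β : V d) (n : ℕ) : ENNReal :=
  ∑' m : Zd d, ENNReal.ofReal (killedProb μ C k n m * Real.exp (dotZ β m))

def Exfun (μ : Zd d → ℝ) (C : Set (V d)) (k : Zd d) (β : V d) (n : ℕ) : ENNReal :=
  ∑' m : Zd d, ENNReal.ofReal (exitProb μ C k n m * Real.exp (dotZ β m))

lemma key_step (hA1 : A1 μ) (β : V d) (n : ℕ) :
    Wfun μ C k β (n+1) + Exfun μ C k β (n+1)
      = Wfun μ C k β n * ENNReal.ofReal (Pgen μ β) := by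
  have h0 := hA1.1.1
  have hsum : Summable (killedProb μ C k n) := (killed_summable hA1 n).1
  have hin := inner_summable hA1.1 h0 hsum
  calc Wfun μ C k β (n+1) + Exfun μ C k β (n+1)
      = ∑' m : Zd d, (ENNReal.ofReal (killedProb μ C k (n+1) m * Real.exp (dotZ β m))
          + ENNReal.ofReal (exitProb μ C k (n+1) m * Real.exp (dotZ β m))) := by
        simp only [Wfun, Exfun]; rw [ENNReal.tsum_add]
    _ = ∑' m : Zd d, ∑' j : Zd d,
          ENNReal.ofReal (killedProb μ C k n j * μ (m - j) * Real.exp (dotZ β m)) := by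
        congr 1; funext m
        have hrw : ENNReal.ofReal ((∑' j : Zd d, killedProb μ C k n j * μ (m - j))
              * Real.exp (dotZ β m))
            = ∑' j : Zd d, ENNReal.ofReal
                (killedProb μ C k n j * μ (m - j) * Real.exp (dotZ β m)) := by
          rw [← tsum_mul_right]
          exact ENNReal.ofReal_tsum_of_nonneg
            (fun j => mul_nonneg (mul_nonneg (killed_nonneg h0 n j) (h0 _))
              (Real.exp_nonneg _)) ((hin m).mul_right _)
        by_cases hm : toV m ∈ C
        · simp only [killedProb, exitProb, if_pos hm, if_neg (not_not_intro hm)]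
          rw [zero_mul, ENNReal.ofReal_zero, add_zero, hrw]
        · simp only [killedProb, exitProb, if_neg hm, if_pos hm]
          rw [zero_mul, ENNReal.ofReal_zero, zero_add, hrw]
    _ = ∑' j : Zd d, ∑' m : Zd d,
          ENNReal.ofReal (killedProb μ C k n j * μ (m - j) * Real.exp (dotZ β m)) :=
        ENNReal.tsum_comm
    _ = ∑' j : Zd d, ENNReal.ofReal (killedProb μ C k n j * Real.exp (dotZ β j))
          * ENNReal.ofReal (Pgen μ β) := by
        congr 1; funext j
        have hptw : ∀ m : Zd d,
            killedProb μ C k n j * μ (m - j) * Real.exp (dotZ β m)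
              = (killedProb μ C k n j * Real.exp (dotZ β j))
                  * (μ (m - j) * Real.exp (dotZ β (m - j))) := by
          intro m
          have : Real.exp (dotZ β m)
              = Real.exp (dotZ β j) * Real.exp (dotZ β (m - j)) := by
            rw [← Real.exp_add]
            congr 1
            rw [dotZ_sub_right]; ring
          rw [this]; ring
        calc ∑' m : Zd d,
              ENNReal.ofReal (killedProb μ C k n j * μ (m - j) * Real.exp (dotZ β m))
            = ∑' m : Zd d, ENNReal.ofReal (killedProb μ C k n j * Real.exp (dotZ β j))
                * ENNReal.ofReal (μ (m - j) * Real.exp (dotZ β (m - j))) := by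
              congr 1; funext m
              rw [hptw m, ENNReal.ofReal_mul
                (mul_nonneg (killed_nonneg h0 n j) (Real.exp_nonneg _))]
          _ = ENNReal.ofReal (killedProb μ C k n j * Real.exp (dotZ β j))
                * ∑' m : Zd d, ENNReal.ofReal (μ (m - j) * Real.exp (dotZ β (m - j))) :=
              ENNReal.tsum_mul_left
          _ = ENNReal.ofReal (killedProb μ C k n j * Real.exp (dotZ β j))
                * ENNReal.ofReal (Pgen μ β) := by
              congr 1
              have he := Equiv.tsum_eq (Equiv.subRight j)
                (fun s : Zd d => ENNReal.ofReal (μ s * Real.exp (dotZ β s)))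
              have h2 : ∑' m : Zd d, ENNReal.ofReal (μ (m - j) * Real.exp (dotZ β (m - j)))
                  = ∑' s : Zd d, ENNReal.ofReal (μ s * Real.exp (dotZ β s)) := he
              rw [h2, ← ENNReal.ofReal_tsum_of_nonneg
                (fun s => mul_nonneg (h0 s) (Real.exp_nonneg _)) (summable_mu_exp hA1 β)]
              rfl
    _ = Wfun μ C k β n * ENNReal.ofReal (Pgen μ β) := ENNReal.tsum_mul_right

lemma exitTotal_mul_exp_le (hA1 : A1 μ) (hk : toV k ∈ C) {β : V d} (hβ : β ∈ Dset μ)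
    (m : Zd d) :
    (Summable fun n : ℕ => exitProb μ C k n m) ∧
    exitTotal μ C k m * Real.exp (dotZ β m) ≤ Real.exp (dotZ β k) := by
  have h0 := hA1.1.1
  set Pβ := ENNReal.ofReal (Pgen μ β) with hPβdef
  have hPβ : Pβ ≤ 1 := by
    rw [hPβdef, ← ENNReal.ofReal_one]
    exact ENNReal.ofReal_le_ofReal hβ
  have hW0 : Wfun μ C k β 0 = ENNReal.ofReal (Real.exp (dotZ β k)) := by
    simp only [Wfun]; rw [tsum_eq_single k]
    · simp [killedProb, hk]
    · intro m' hm'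
      simp only [killedProb]
      rw [if_neg, zero_mul, ENNReal.ofReal_zero]
      rintro ⟨rfl, -⟩; exact hm' rfl
  have hWle : ∀ n, Wfun μ C k β n ≤ Wfun μ C k β 0 := by
    intro n
    induction n with
    | zero => exact le_rfl
    | succ n ih =>
        calc Wfun μ C k β (n+1) ≤ Wfun μ C k β (n+1) + Exfun μ C k β (n+1) := le_self_add
          _ = Wfun μ C k β n * Pβ := key_step hA1 β n
          _ ≤ Wfun μ C k β n * 1 := mul_le_mul_right hPβ _
          _ = Wfun μ C k β n := mul_one _
          _ ≤ Wfun μ C k β 0 := ih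
  have hEx0 : Exfun μ C k β 0 = 0 := by
    simp only [Exfun]
    convert tsum_zero with m'
    simp only [exitProb]
    rw [if_neg, zero_mul, ENNReal.ofReal_zero]
    rintro ⟨rfl, hnot⟩; exact hnot hk
  have htel : ∀ N, (∑ n ∈ Finset.range (N+1), Exfun μ C k β n) + Wfun μ C k β N
      ≤ Wfun μ C k β 0 := by
    intro N
    induction N with
    | zero => simp [hEx0]
    | succ N ih =>
        rw [Finset.sum_range_succ]
        calc ∑ n ∈ Finset.range (N+1), Exfun μ C k β n + Exfun μ C k β (N+1)
              + Wfun μ C k β (N+1)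
            = ∑ n ∈ Finset.range (N+1), Exfun μ C k β n
              + (Wfun μ C k β (N+1) + Exfun μ C k β (N+1)) := by ring
          _ = ∑ n ∈ Finset.range (N+1), Exfun μ C k β n + Wfun μ C k β N * Pβ := by
              rw [key_step hA1 β N]
          _ ≤ ∑ n ∈ Finset.range (N+1), Exfun μ C k β n + Wfun μ C k β N := by
              gcongr
              calc Wfun μ C k β N * Pβ ≤ Wfun μ C k β N * 1 := mul_le_mul_right hPβ _
                _ = Wfun μ C k β N := mul_one _
          _ ≤ Wfun μ C k β 0 := ih
  have hsumEx : ∑' n : ℕ, Exfun μ C k β n ≤ ENNReal.ofReal (Real.exp (dotZ β k)) := by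
    rw [← hW0]
    refine ENNReal.summable.tsum_le_of_sum_range_le fun N => ?_
    cases N with
    | zero => simp
    | succ N =>
        calc ∑ n ∈ Finset.range (N+1), Exfun μ C k β n
            ≤ ∑ n ∈ Finset.range (N+1), Exfun μ C k β n + Wfun μ C k β N := le_self_add
          _ ≤ Wfun μ C k β 0 := htel N
  have hts : ∑' n : ℕ, ENNReal.ofReal (exitProb μ C k n m * Real.exp (dotZ β m))
      ≤ ENNReal.ofReal (Real.exp (dotZ β k)) := by
    refine le_trans (ENNReal.tsum_le_tsum fun n => ?_) hsumEx
    exact ENNReal.le_tsum m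
  have hne : ∑' n : ℕ, ENNReal.ofReal (exitProb μ C k n m * Real.exp (dotZ β m)) ≠ ⊤ :=
    fun h => by simp [h] at hts
  have hann : ∀ n : ℕ, 0 ≤ exitProb μ C k n m * Real.exp (dotZ β m) :=
    fun n => mul_nonneg (exit_nonneg h0 n m) (Real.exp_nonneg _)
  have hsa : Summable fun n : ℕ => exitProb μ C k n m * Real.exp (dotZ β m) := by
    have hs := ENNReal.summable_toReal hne
    refine hs.congr fun n => ?_
    exact ENNReal.toReal_ofReal (hann n)
  have hsexit : Summable fun n : ℕ => exitProb μ C k n m := by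
    have h2 := hsa.mul_right (Real.exp (dotZ β m))⁻¹
    refine h2.congr fun n => ?_
    field_simp
  refine ⟨hsexit, ?_⟩
  have heq : exitTotal μ C k m * Real.exp (dotZ β m)
      = ∑' n : ℕ, exitProb μ C k n m * Real.exp (dotZ β m) := (tsum_mul_right).symm
  have hof : ENNReal.ofReal (exitTotal μ C k m * Real.exp (dotZ β m))
      ≤ ENNReal.ofReal (Real.exp (dotZ β k)) := by
    rw [heq, ENNReal.ofReal_tsum_of_nonneg hann hsa]
    exact hts
  exact (ENNReal.ofReal_le_ofReal_iff (Real.exp_nonneg _)).mp hof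

end B2

section B4
variable {μ : Zd d → ℝ}

/-- ℓ¹ size of a lattice point. -/
def Nl (m : Zd d) : ℝ := ∑ i, |(m i : ℝ)|

lemma Nl_nonneg (m : Zd d) : 0 ≤ Nl m := Finset.sum_nonneg fun i _ => abs_nonneg _

lemma norm_toV_le_Nl (m : Zd d) : ‖toV m‖ ≤ Nl m := by
  have h := norm_le_sum_abs (toV m)
  simpa [toV, Nl] using h

lemma Nl_le_d_norm (m : Zd d) : Nl m ≤ (d : ℝ) * ‖toV m‖ := by
  have h : ∀ i : Fin d, |(m i : ℝ)| ≤ ‖toV m‖ := by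
    intro i
    have := coord_abs_le_norm (toV m) i
    simpa [toV] using this
  calc Nl m ≤ ∑ _i : Fin d, ‖toV m‖ := Finset.sum_le_sum fun i _ => h i
    _ = (d : ℝ) * ‖toV m‖ := by simp [Finset.sum_const, mul_comm]

lemma dotZ_smul_left (a : ℝ) (x : V d) (m : Zd d) : dotZ (a • x) m = a * dotZ x m := by
  simp [dotZ, Finset.mul_sum, mul_assoc]

lemma dotZ_le_norm_mul_Nl (y : V d) (m : Zd d) : dotZ y m ≤ ‖y‖ * Nl m := by
  calc dotZ y m ≤ ∑ i, |y i * (m i : ℝ)| := Finset.sum_le_sum fun i _ => le_abs_self _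
    _ = ∑ i, |y i| * |(m i : ℝ)| := by simp [abs_mul]
    _ ≤ ∑ i, ‖y‖ * |(m i : ℝ)| :=
        Finset.sum_le_sum fun i _ =>
          mul_le_mul_of_nonneg_right (coord_abs_le_norm y i) (abs_nonneg _)
    _ = ‖y‖ * Nl m := by rw [Nl, Finset.mul_sum]

/-- sign vector attached to a finset of coordinates. -/
def sgnV (t : Finset (Fin d)) : V d := WithLp.toLp 2 (fun i => if i ∈ t then (1 : ℝ) else -1)

lemma summable_mu_exp_nl (hA1 : A1 μ) (β : V d) {c : ℝ} (hc : 0 ≤ c) :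
    Summable (fun j : Zd d => μ j * Real.exp (dotZ β j) * Real.exp (c * Nl j)) := by
  have h0 := hA1.1.1
  set F : Zd d → ℝ := fun j =>
    ∑ t ∈ (Finset.univ : Finset (Fin d)).powerset, μ j * Real.exp (dotZ (β + c • sgnV t) j)
    with hF
  have hsumF : Summable F := by
    apply summable_sum
    intro t _
    exact summable_mu_exp hA1 (β + c • sgnV t)
  refine Summable.of_nonneg_of_le
    (fun j => mul_nonneg (mul_nonneg (h0 j) (Real.exp_nonneg _)) (Real.exp_nonneg _))
    (fun j => ?_) hsumF
  have hprod : Real.exp (c * Nl j) = ∏ i, Real.exp (c * |(j i : ℝ)|) := by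
    rw [← Real.exp_sum]
    congr 1
    rw [Nl, Finset.mul_sum]
  have hfac : ∀ i : Fin d, Real.exp (c * |(j i : ℝ)|)
      ≤ Real.exp (c * (j i : ℝ)) + Real.exp (-(c * (j i : ℝ))) := by
    intro i
    rcases abs_cases ((j i : ℝ)) with ⟨h1, _⟩ | ⟨h1, _⟩
    · rw [h1]
      have := Real.exp_nonneg (-(c * (j i : ℝ)))
      linarith
    · rw [h1, mul_neg]
      have := Real.exp_nonneg (c * (j i : ℝ))
      linarith
  have hexpand : (∏ i, (Real.exp (c * (j i : ℝ)) + Real.exp (-(c * (j i : ℝ)))))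
      = ∑ t ∈ (Finset.univ : Finset (Fin d)).powerset, Real.exp (dotZ (c • sgnV t) j) := by
    rw [Finset.prod_add]
    congr 1
    funext t
    rw [← Real.exp_sum, ← Real.exp_sum, ← Real.exp_add]
    congr 1
    rw [dotZ]
    rw [← Finset.sum_filter_add_sum_filter_not Finset.univ (fun i => i ∈ t)]
    congr 1
    · rw [Finset.filter_mem_eq_inter, Finset.univ_inter]
      apply Finset.sum_congr rfl
      intro i hi
      simp [sgnV, hi]
    · rw [← Finset.sdiff_eq_filter]
      apply Finset.sum_congr rfl
      intro i hi
      rw [Finset.mem_sdiff] at hi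
      simp [sgnV, hi.2, mul_comm, mul_assoc]
  calc μ j * Real.exp (dotZ β j) * Real.exp (c * Nl j)
      ≤ μ j * Real.exp (dotZ β j)
          * (∏ i, (Real.exp (c * (j i : ℝ)) + Real.exp (-(c * (j i : ℝ))))) := by
        apply mul_le_mul_of_nonneg_left _ (mul_nonneg (h0 j) (Real.exp_nonneg _))
        rw [hprod]
        apply Finset.prod_le_prod (fun i _ => (Real.exp_nonneg _)) (fun i _ => hfac i)
    _ = F j := by
        rw [hexpand, hF, Finset.mul_sum]
        apply Finset.sum_congr rfl
        intro t _
        rw [dotZ_add_left, Real.exp_add]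
        ring

/-- The candidate derivative of `Pgen` at `x`. -/
def pgenDeriv (μ : Zd d → ℝ) (x : V d) : V d →L[ℝ] ℝ :=
  ∑' j : Zd d, (μ j * Real.exp (dotZ x j)) • (innerSL ℝ (toV j))

lemma innerSL_toV_apply (m : Zd d) (y : V d) : (innerSL ℝ (toV m)) y = dotZ y m := by
  rw [innerSL_apply_apply, real_inner_comm, ← dotZ_eq_inner]

lemma fprime_norm_le (h0 : ∀ j, 0 ≤ μ j) (x : V d) (j : Zd d) :
    ‖(μ j * Real.exp (dotZ x j)) • (innerSL ℝ (toV j))‖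
      ≤ μ j * Real.exp (dotZ x j) * ‖toV j‖ := by
  apply ContinuousLinearMap.opNorm_le_bound _
    (mul_nonneg (mul_nonneg (h0 j) (Real.exp_nonneg _)) (norm_nonneg _))
  intro y
  rw [ContinuousLinearMap.smul_apply, smul_eq_mul, Real.norm_eq_abs, abs_mul,
    abs_of_nonneg (mul_nonneg (h0 j) (Real.exp_nonneg _))]
  have hin : |((innerSL ℝ) (toV j)) y| ≤ ‖toV j‖ * ‖y‖ := by
    rw [innerSL_apply_apply, ← Real.norm_eq_abs]
    exact norm_inner_le_norm _ _
  have hnn : (0:ℝ) ≤ μ j * Real.exp (dotZ x j) := mul_nonneg (h0 j) (Real.exp_nonneg _)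
  calc μ j * Real.exp (dotZ x j) * |((innerSL ℝ) (toV j)) y|
      ≤ μ j * Real.exp (dotZ x j) * (‖toV j‖ * ‖y‖) := mul_le_mul_of_nonneg_left hin hnn
    _ = μ j * Real.exp (dotZ x j) * ‖toV j‖ * ‖y‖ := by ring

lemma fprime_bound (hA1 : A1 μ) (x₀ : V d) {x : V d} (hx : x ∈ Metric.ball x₀ 1)
    (j : Zd d) :
    ‖(μ j * Real.exp (dotZ x j)) • (innerSL ℝ (toV j))‖
      ≤ μ j * Real.exp (dotZ x₀ j) * Real.exp (2 * Nl j) := by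
  have h0 := hA1.1.1
  refine le_trans (fprime_norm_le h0 x j) ?_
  have hEx : Real.exp (dotZ x j) ≤ Real.exp (dotZ x₀ j) * Real.exp (Nl j) := by
    rw [← Real.exp_add]
    apply Real.exp_le_exp.mpr
    have h1 : dotZ x j - dotZ x₀ j = dotZ (x - x₀) j := (dotZ_sub_left x x₀ j).symm
    have h2 : dotZ (x - x₀) j ≤ ‖x - x₀‖ * Nl j := dotZ_le_norm_mul_Nl _ _
    have h3 : ‖x - x₀‖ ≤ 1 := by
      rw [Metric.mem_ball, dist_eq_norm] at hx
      linarith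
    nlinarith [Nl_nonneg j]
  have hTv : ‖toV j‖ ≤ Real.exp (Nl j) := by
    have h4 := norm_toV_le_Nl j
    have h5 : Nl j + 1 ≤ Real.exp (Nl j) := Real.add_one_le_exp _
    linarith
  calc μ j * Real.exp (dotZ x j) * ‖toV j‖
      ≤ μ j * (Real.exp (dotZ x₀ j) * Real.exp (Nl j)) * Real.exp (Nl j) := by
        apply mul_le_mul (mul_le_mul_of_nonneg_left hEx (h0 j)) hTv (norm_nonneg _)
        exact mul_nonneg (h0 j) (mul_nonneg (Real.exp_nonneg _) (Real.exp_nonneg _))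
    _ = μ j * Real.exp (dotZ x₀ j) * Real.exp (2 * Nl j) := by
        rw [two_mul, Real.exp_add]; ring

lemma fprime_each (x : V d) (j : Zd d) :
    HasFDerivAt (fun y : V d => μ j * Real.exp (dotZ y j))
      ((μ j * Real.exp (dotZ x j)) • (innerSL ℝ (toV j))) x := by
  have hlin : HasFDerivAt (fun y : V d => (innerSL ℝ (toV j)) y)
      (innerSL ℝ (toV j)) x := (innerSL ℝ (toV j)).hasFDerivAt
  have h2 := (hlin.exp).const_mul (μ j)
  have hfun : (fun y : V d => μ j * Real.exp ((innerSL ℝ (toV j)) y))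
      = fun y : V d => μ j * Real.exp (dotZ y j) := by
    funext y; rw [innerSL_toV_apply]
  have hder : μ j • (Real.exp ((innerSL ℝ (toV j)) x) • (innerSL ℝ (toV j)))
      = (μ j * Real.exp (dotZ x j)) • (innerSL ℝ (toV j)) := by
    rw [innerSL_toV_apply, smul_smul]
  rw [hfun, hder] at h2
  exact h2

lemma pgen_hasFDerivAt (hA1 : A1 μ) (x₀ : V d) :
    HasFDerivAt (Pgen μ) (pgenDeriv μ x₀) x₀ := by
  have hu : Summable (fun j : Zd d => μ j * Real.exp (dotZ x₀ j) * Real.exp (2 * Nl j)) :=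
    summable_mu_exp_nl hA1 x₀ (by norm_num)
  exact hasFDerivAt_tsum_of_isPreconnected hu Metric.isOpen_ball
    (convex_ball x₀ 1).isPreconnected
    (fun j x _ => fprime_each x j)
    (fun j x hx => fprime_bound hA1 x₀ hx j)
    (Metric.mem_ball_self one_pos)
    (summable_mu_exp hA1 x₀)
    (Metric.mem_ball_self one_pos)

lemma summable_pgenDeriv (hA1 : A1 μ) (x₀ : V d) :
    Summable (fun j : Zd d => (μ j * Real.exp (dotZ x₀ j)) • (innerSL ℝ (toV j))) := by
  apply Summable.of_norm_bounded (summable_mu_exp_nl hA1 x₀ (by norm_num : (0:ℝ) ≤ 2))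
  intro j
  exact fprime_bound hA1 x₀ (Metric.mem_ball_self one_pos) j

lemma pgenDeriv_apply (hA1 : A1 μ) (x₀ w : V d) :
    pgenDeriv μ x₀ w = ∑' j : Zd d, μ j * Real.exp (dotZ x₀ j) * dotZ w j := by
  have h := (ContinuousLinearMap.apply ℝ ℝ w).map_tsum (summable_pgenDeriv hA1 x₀)
  have h2 : pgenDeriv μ x₀ w
      = ∑' j : Zd d, ((μ j * Real.exp (dotZ x₀ j)) • (innerSL ℝ (toV j))) w := h
  rw [h2]
  congr 1

lemma pgen_convex (hA1 : A1 μ) : ConvexOn ℝ Set.univ (Pgen μ) := by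
  refine ⟨convex_univ, fun x _ y _ a b ha hb hab => ?_⟩
  have hineq : ∀ j : Zd d, μ j * Real.exp (dotZ (a • x + b • y) j)
      ≤ a * (μ j * Real.exp (dotZ x j)) + b * (μ j * Real.exp (dotZ y j)) := by
    intro j
    have hd : dotZ (a • x + b • y) j = a * dotZ x j + b * dotZ y j := by
      rw [dotZ_add_left, dotZ_smul_left, dotZ_smul_left]
    rw [hd]
    have hexp := convexOn_exp.2 (Set.mem_univ (dotZ x j)) (Set.mem_univ (dotZ y j)) ha hb hab
    simp only [smul_eq_mul] at hexp
    have hμ := hA1.1.1 j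
    nlinarith [hexp]
  have hs1 : Summable (fun j : Zd d =>
      a * (μ j * Real.exp (dotZ x j)) + b * (μ j * Real.exp (dotZ y j))) :=
    ((summable_mu_exp hA1 x).mul_left a).add ((summable_mu_exp hA1 y).mul_left b)
  calc Pgen μ (a • x + b • y)
      ≤ ∑' j : Zd d, (a * (μ j * Real.exp (dotZ x j)) + b * (μ j * Real.exp (dotZ y j))) :=
        Summable.tsum_le_tsum hineq (summable_mu_exp hA1 _) hs1
    _ = a * Pgen μ x + b * Pgen μ y := by
        rw [Summable.tsum_add ((summable_mu_exp hA1 x).mul_left a) ((summable_mu_exp hA1 y).mul_left b),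
          tsum_mul_left, tsum_mul_left]
        rfl
    _ = a • Pgen μ x + b • Pgen μ y := by simp

lemma pgen_zero_eq_one (hA1 : A1 μ) : Pgen μ (0 : V d) = 1 := by
  rw [Pgen]
  have : ∀ j : Zd d, μ j * Real.exp (dotZ (0 : V d) j) = μ j := by
    intro j; rw [dotZ_zero_left, Real.exp_zero, mul_one]
  rw [tsum_congr this, hA1.1.2.tsum_eq]

end B4

section B5
variable {μ : Zd d → ℝ}

lemma decrease_of_deriv_neg {f : V d → ℝ} {L : V d →L[ℝ] ℝ} {α w : V d}
    (hf : HasFDerivAt f L α) (hw : L w < 0) :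
    ∃ t : ℝ, 0 < t ∧ f (α + t • w) < f α := by
  have hf' : HasFDerivAt f L (α + (0 : ℝ) • w) := by simpa using hf
  have hpath : HasDerivAt (fun t : ℝ => α + t • w) w 0 := by
    simpa using ((hasDerivAt_id (0 : ℝ)).smul_const w).const_add α
  have hg : HasDerivAt (fun t : ℝ => f (α + t • w)) (L w) 0 := by
    exact hf'.comp_hasDerivAt 0 hpath
  rw [hasDerivAt_iff_tendsto_slope] at hg
  have hmono : nhdsWithin (0 : ℝ) (Set.Ioi 0) ≤ nhdsWithin (0 : ℝ) {(0 : ℝ)}ᶜ :=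
    nhdsWithin_mono 0 (fun t ht => ne_of_gt ht)
  have hev : ∀ᶠ t in nhdsWithin (0 : ℝ) (Set.Ioi 0),
      slope (fun t : ℝ => f (α + t • w)) 0 t < 0 :=
    ((hg.eventually (gt_mem_nhds hw)).filter_mono hmono)
  have hev2 : ∀ᶠ t in nhdsWithin (0 : ℝ) (Set.Ioi 0), t ∈ Set.Ioi (0 : ℝ) :=
    self_mem_nhdsWithin
  obtain ⟨t, hts, htpos⟩ := (hev.and hev2).exists
  refine ⟨t, htpos, ?_⟩
  rw [slope_def_field] at hts
  have htne : t - 0 > 0 := by simpa using htpos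
  have h5 : f (α + t • w) - f (α + (0:ℝ) • w) < 0 := by
    have h6 := mul_neg_of_neg_of_pos hts htne
    rwa [div_mul_cancel₀] at h6
    exact ne_of_gt htne
  have h7 : f (α + (0:ℝ) • w) = f α := by simp
  linarith [h5, h7.symm.le]

lemma isMin_of_deriv_zero {f : V d → ℝ} {α : V d}
    (hconv : ConvexOn ℝ Set.univ f) (hf : HasFDerivAt f (0 : V d →L[ℝ] ℝ) α) :
    ∀ β : V d, f α ≤ f β := by
  intro β
  set g : ℝ → ℝ := fun t => f (α + t • (β - α)) with hgdef
  have hf' : HasFDerivAt f (0 : V d →L[ℝ] ℝ) (α + (0 : ℝ) • (β - α)) := by simpa using hf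
  have hpath : HasDerivAt (fun t : ℝ => α + t • (β - α)) (β - α) 0 := by
    simpa using ((hasDerivAt_id (0 : ℝ)).smul_const (β - α)).const_add α
  have hg : HasDerivAt g 0 0 := by
    have := hf'.comp_hasDerivAt 0 hpath
    simp only [ContinuousLinearMap.zero_apply] at this
    exact this
  rw [hasDerivAt_iff_tendsto_slope] at hg
  have hmono : nhdsWithin (0 : ℝ) (Set.Ioi 0) ≤ nhdsWithin (0 : ℝ) {(0 : ℝ)}ᶜ :=
    nhdsWithin_mono 0 (fun t ht => ne_of_gt ht)
  have hIoo : Set.Ioo (0 : ℝ) 1 ∈ nhdsWithin (0 : ℝ) (Set.Ioi 0) :=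
    Ioo_mem_nhdsGT_of_mem ⟨le_refl 0, zero_lt_one⟩
  have hslope : ∀ᶠ t in nhdsWithin (0 : ℝ) (Set.Ioi 0), slope g 0 t ≤ f β - f α := by
    filter_upwards [hIoo] with t ht
    have ht0 : 0 < t := ht.1
    have ht1 : t < 1 := ht.2
    have hcomb : α + t • (β - α) = (1 - t) • α + t • β := by module
    have hcv := hconv.2 (Set.mem_univ α) (Set.mem_univ β)
      (by linarith : (0:ℝ) ≤ 1 - t) ht0.le (by ring)
    have hgt : g t ≤ (1 - t) * f α + t * f β := by
      rw [hgdef]; simp only []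
      rw [hcomb]
      simpa [smul_eq_mul] using hcv
    have hg0 : g 0 = f α := by simp [hgdef]
    rw [slope_def_field, hg0]
    rw [div_le_iff₀ (by simpa using ht0)]
    ring_nf
    nlinarith [hgt]
  have hle := le_of_tendsto (hg.mono_left hmono) hslope
  linarith

lemma pgen_at_max_eq_one (hA1 : A1 μ) {α u : V d} (hu : ‖u‖ = 1)
    (hαD : α ∈ Dset μ) (hmax : ∀ β ∈ Dset μ, ⟪β, u⟫ ≤ ⟪α, u⟫) : Pgen μ α = 1 := by
  by_contra hne
  have hPα : Pgen μ α ≤ 1 := hαD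
  have hlt : Pgen μ α < 1 := lt_of_le_of_ne hPα hne
  set A := Pgen μ (α + u) with hA
  obtain ⟨t, ht0, ht1, htv⟩ : ∃ t : ℝ, 0 < t ∧ t ≤ 1
      ∧ (1 - t) * Pgen μ α + t * A < 1 := by
    by_cases hA1' : A ≤ 1
    · exact ⟨1/2, by norm_num, by norm_num, by nlinarith⟩
    · push_neg at hA1'
      have hpos : 0 < A - Pgen μ α := by nlinarith
      set t := (1 - Pgen μ α) / (2 * (A - Pgen μ α)) with htdef
      have ht0 : 0 < t := div_pos (by linarith) (by linarith)
      have hd : t * (A - Pgen μ α) = (1 - Pgen μ α) / 2 := by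
        rw [htdef]; field_simp
      refine ⟨t, ht0, ?_, ?_⟩
      · rw [htdef, div_le_one (by linarith)]
        nlinarith
      · have hval : (1 - t) * Pgen μ α + t * A
            = Pgen μ α + t * (A - Pgen μ α) := by ring
        rw [hval, hd]
        linarith
  have hconv := (pgen_convex hA1).2 (Set.mem_univ α) (Set.mem_univ (α + u))
    (by linarith : (0:ℝ) ≤ 1 - t) ht0.le (by ring)
  have hcomb : (1 - t) • α + t • (α + u) = α + t • u := by module
  have hmem : α + t • u ∈ Dset μ := by
    have : Pgen μ (α + t • u) ≤ (1 - t) * Pgen μ α + t * A := by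
      rw [← hcomb]
      simpa [smul_eq_mul] using hconv
    exact le_of_lt (lt_of_le_of_lt this htv)
  have h2 := hmax _ hmem
  rw [inner_add_left, real_inner_smul_left] at h2
  have h3 : ⟪u, u⟫ = (1:ℝ) := by
    rw [real_inner_self_eq_norm_sq, hu]; norm_num
  rw [h3] at h2
  linarith

lemma max_dir_eq (hA1 : A1 μ) {α : V d} {L : V d →L[ℝ] ℝ}
    (hL : HasFDerivAt (Pgen μ) L α) (hPα : Pgen μ α = 1) (hL0 : L ≠ 0)
    {w : V d} (hw : ‖w‖ = 1) (hmax : ∀ β ∈ Dset μ, ⟪β, w⟫ ≤ ⟪α, w⟫) :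
    w = ‖(InnerProductSpace.toDual ℝ (V d)).symm L‖⁻¹
        • ((InnerProductSpace.toDual ℝ (V d)).symm L) := by
  set n := (InnerProductSpace.toDual ℝ (V d)).symm L with hn
  have hLn : ∀ y, L y = ⟪n, y⟫ := fun y => (InnerProductSpace.toDual_symm_apply).symm
  have hn0 : n ≠ 0 := by
    intro h
    apply hL0
    apply ContinuousLinearMap.ext
    intro y
    rw [hLn y, h]
    simp
  have hnn : (0:ℝ) < ⟪n, n⟫ := by
    rw [real_inner_self_eq_norm_sq]
    exact pow_pos (norm_pos_iff.mpr hn0) 2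
  have stepA : ∀ w' : V d, L w' < 0 → ⟪w', w⟫ ≤ 0 := by
    intro w' hw'
    obtain ⟨t, ht, hPt⟩ := decrease_of_deriv_neg hL hw'
    have h1 : Pgen μ (α + t • w') < 1 := by rw [← hPα]; exact hPt
    have hmem : α + t • w' ∈ Dset μ := le_of_lt h1
    have h2 := hmax _ hmem
    rw [inner_add_left, real_inner_smul_left] at h2
    nlinarith
  have stepB : ∀ w' : V d, L w' ≤ 0 → ⟪w', w⟫ ≤ 0 := by
    intro w' hw'
    by_contra hpos
    push_neg at hpos
    set c0 : ℝ := ⟪n, w⟫ with hc0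
    set ε : ℝ := ⟪w', w⟫ / (2 * (|c0| + 1)) with hε
    have hεpos : 0 < ε := div_pos hpos (by positivity)
    have hL' : L (w' - ε • n) < 0 := by
      rw [map_sub, _root_.map_smul, hLn n, smul_eq_mul]
      nlinarith
    have h3 := stepA _ hL'
    rw [inner_sub_left, real_inner_smul_left] at h3
    have h4 : ⟪w', w⟫ ≤ ε * c0 := by linarith
    have h5 : ε * c0 ≤ ε * (|c0| + 1) :=
      mul_le_mul_of_nonneg_left (by cases abs_cases c0 <;> linarith) hεpos.le
    have h6 : ε * (|c0| + 1) = ⟪w', w⟫ / 2 := by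
      rw [hε]; field_simp
    nlinarith
  set c : ℝ := ⟪n, w⟫ / ⟪n, n⟫ with hc
  have hLz : L (w - c • n) = 0 := by
    rw [map_sub, _root_.map_smul, hLn, hLn, smul_eq_mul, hc]
    rw [div_mul_cancel₀ _ (ne_of_gt hnn), sub_self]
  have h5 := stepB _ (le_of_eq hLz)
  have h6 : ⟪-(w - c • n), w⟫ ≤ 0 := by
    apply stepB
    rw [map_neg, hLz, neg_zero]
  rw [inner_neg_left] at h6
  have hzw : ⟪w - c • n, w⟫ = (0:ℝ) := le_antisymm h5 (by linarith)
  have hzn : ⟪n, w - c • n⟫ = (0:ℝ) := by rw [← hLn, hLz]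
  have hzn' : ⟪w - c • n, n⟫ = (0:ℝ) := by rw [real_inner_comm]; exact hzn
  have hz : w - c • n = 0 := by
    have h7 : ⟪w - c • n, w - c • n⟫ = (0:ℝ) := by
      rw [inner_sub_right, hzw, real_inner_smul_right, hzn']
      ring
    exact inner_self_eq_zero.mp h7
  have hwcn : w = c • n := by rwa [sub_eq_zero] at hz
  have hcnonneg : 0 ≤ c := by
    have h8 : L (-n) < 0 := by
      rw [map_neg, hLn]
      linarith
    have h9 := stepA _ h8
    rw [inner_neg_left] at h9
    rw [hc]
    exact div_nonneg (by linarith) hnn.le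
  have hnorm : c * ‖n‖ = 1 := by
    rw [← hw, hwcn, norm_smul, Real.norm_eq_abs, abs_of_nonneg hcnonneg]
  have hnne : ‖n‖ ≠ 0 := norm_ne_zero_iff.mpr hn0
  have hcval : c = ‖n‖⁻¹ := by
    field_simp at hnorm ⊢
    linarith [hnorm]
  rw [hwcn, hcval]

end B5

section B6
variable {μ : Zd d → ℝ}

lemma summable_pi_prod (g : ℤ → ℝ) (hg0 : ∀ z, 0 ≤ g z) (hg : Summable g) :
    ∀ n : ℕ, Summable (fun m : Fin n → ℤ => ∏ i, g (m i)) := by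
  intro n
  induction n with
  | zero =>
      apply summable_of_ne_finset_zero (s := {(fun i => Fin.elim0 i : Fin 0 → ℤ)})
      intro b hb
      exfalso
      apply hb
      simp only [Finset.mem_singleton]
      funext i
      exact Fin.elim0 i
  | succ n ih =>
      have hg0' : (0 : ℤ → ℝ) ≤ g := fun z => hg0 z
      have hg0'' : (0 : (Fin n → ℤ) → ℝ) ≤ fun m : Fin n → ℤ => ∏ i, g (m i) :=
        fun m => Finset.prod_nonneg fun i _ => hg0 _
      have hFp : Summable (fun p : ℤ × (Fin n → ℤ) => g p.1 * ∏ i, g (p.2 i)) :=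
        Summable.mul_of_nonneg (f := g) (g := fun m : Fin n → ℤ => ∏ i, g (m i))
          hg ih hg0' hg0''
      have hcomp : (fun m : Fin (n+1) → ℤ => ∏ i, g (m i))
          = (fun p : ℤ × (Fin n → ℤ) => g p.1 * ∏ i, g (p.2 i))
            ∘ (Fin.consEquiv (fun _ => ℤ)).symm := by
        funext m
        simp [Fin.consEquiv, Fin.prod_univ_succ, Fin.tail]
      rw [hcomp]
      exact ((Fin.consEquiv (fun _ => ℤ)).symm.summable_iff).mpr hFp

lemma summable_exp_abs {δ : ℝ} (hδ : 0 < δ) :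
    Summable (fun z : ℤ => Real.exp (-δ * |(z : ℝ)|)) := by
  have hgeo : Summable (fun n : ℕ => (Real.exp (-δ)) ^ n) :=
    summable_geometric_of_lt_one (Real.exp_nonneg _)
      (Real.exp_lt_one_iff.mpr (by linarith))
  apply Summable.of_nat_of_neg
  · refine hgeo.congr fun n => ?_
    rw [← Real.exp_nat_mul]
    congr 1
    push_cast
    rw [abs_of_nonneg (by positivity)]
    ring
  · refine hgeo.congr fun n => ?_
    rw [← Real.exp_nat_mul]
    congr 1
    push_cast
    rw [abs_neg, abs_of_nonneg (by positivity)]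
    ring

lemma dotZ_single (i : Fin d) (m : Zd d) :
    dotZ (EuclideanSpace.single i (1 : ℝ)) m = (m i : ℝ) := by
  rw [dotZ]
  rw [Finset.sum_eq_single i]
  · rw [EuclideanSpace.single_apply, if_pos rfl, one_mul]
  · intro b _ hb
    rw [EuclideanSpace.single_apply, if_neg hb, zero_mul]
  · intro h; exact absurd (Finset.mem_univ i) h

lemma dset_bounded (αfun : V d → V d)
    (hα : ∀ v : V d, ‖v‖ = 1 → IsMaxOn' μ v (αfun v)) :
    ∃ R : ℝ, 0 ≤ R ∧ ∀ β ∈ Dset μ, ‖β‖ ≤ R := by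
  set B := ∑ i : Fin d,
    (|⟪αfun (EuclideanSpace.single i 1), (EuclideanSpace.single i 1 : V d)⟫|
      + |⟪αfun (-EuclideanSpace.single i 1), (-EuclideanSpace.single i 1 : V d)⟫|) with hB
  have hB0 : 0 ≤ B :=
    Finset.sum_nonneg fun i _ => add_nonneg (abs_nonneg _) (abs_nonneg _)
  refine ⟨(d : ℝ) * B, by positivity, fun β hβ => ?_⟩
  have hcoord : ∀ i : Fin d, |β i| ≤ B := by
    intro i
    have hnrm : ‖(EuclideanSpace.single i 1 : V d)‖ = 1 := by
      rw [EuclideanSpace.norm_single]; norm_num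
    have hnrm' : ‖(-EuclideanSpace.single i 1 : V d)‖ = 1 := by
      rw [norm_neg]; exact hnrm
    have h1 := (hα _ hnrm).2 β hβ
    have h2 := (hα _ hnrm').2 β hβ
    have hβi : ⟪β, (EuclideanSpace.single i 1 : V d)⟫ = β i := by
      rw [EuclideanSpace.inner_single_right]; simp
    have hβi' : ⟪β, (-EuclideanSpace.single i 1 : V d)⟫ = -β i := by
      rw [inner_neg_right, hβi]
    rw [hβi] at h1
    rw [hβi'] at h2
    have hterm : |⟪αfun (EuclideanSpace.single i 1), (EuclideanSpace.single i 1 : V d)⟫|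
        + |⟪αfun (-EuclideanSpace.single i 1), (-EuclideanSpace.single i 1 : V d)⟫| ≤ B := by
      rw [hB]
      apply Finset.single_le_sum (f := fun i : Fin d =>
        (|⟪αfun (EuclideanSpace.single i 1), (EuclideanSpace.single i 1 : V d)⟫|
          + |⟪αfun (-EuclideanSpace.single i 1), (-EuclideanSpace.single i 1 : V d)⟫|))
        (fun j _ => add_nonneg (abs_nonneg _) (abs_nonneg _)) (Finset.mem_univ i)
    rw [abs_le]
    constructor
    · have := le_abs_self ⟪αfun (-EuclideanSpace.single i 1), (-EuclideanSpace.single i 1 : V d)⟫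
      have habs := abs_nonneg ⟪αfun (EuclideanSpace.single i 1), (EuclideanSpace.single i 1 : V d)⟫
      linarith
    · have := le_abs_self ⟪αfun (EuclideanSpace.single i 1), (EuclideanSpace.single i 1 : V d)⟫
      have habs := abs_nonneg ⟪αfun (-EuclideanSpace.single i 1), (-EuclideanSpace.single i 1 : V d)⟫
      linarith
  calc ‖β‖ ≤ ∑ i, |β i| := norm_le_sum_abs β
    _ ≤ ∑ _i : Fin d, B := Finset.sum_le_sum fun i _ => hcoord i
    _ = (d : ℝ) * B := by simp [Finset.sum_const, mul_comm]

lemma exists_pgen_lt_one (hA1 : A1 μ) : ∃ β : V d, Pgen μ β < 1 := by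
  have hL0d := pgen_hasFDerivAt hA1 (0 : V d)
  set L0 := pgenDeriv μ (0 : V d) with hL0
  have hL0ne : L0 ≠ 0 := by
    obtain ⟨i, hi⟩ := hA1.2.2.2
    intro h
    apply hi
    have happ := pgenDeriv_apply hA1 0 (EuclideanSpace.single i 1)
    rw [← hL0, h] at happ
    simp only [ContinuousLinearMap.zero_apply] at happ
    have hconv : ∀ j : Zd d,
        μ j * Real.exp (dotZ (0 : V d) j) * dotZ (EuclideanSpace.single i 1) j
          = (j i : ℝ) * μ j := by
      intro j
      rw [dotZ_zero_left, Real.exp_zero, dotZ_single]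
      ring
    rw [tsum_congr hconv] at happ
    exact happ.symm
  set n0 := (InnerProductSpace.toDual ℝ (V d)).symm L0 with hn0def
  have hLn : ∀ y, L0 y = ⟪n0, y⟫ := fun y => (InnerProductSpace.toDual_symm_apply).symm
  have hn0 : n0 ≠ 0 := by
    intro h
    apply hL0ne
    apply ContinuousLinearMap.ext
    intro y
    rw [hLn y, h]
    simp
  have hneg : L0 (-n0) < 0 := by
    rw [map_neg, hLn]
    have : (0:ℝ) < ⟪n0, n0⟫ := by
      rw [real_inner_self_eq_norm_sq]
      exact pow_pos (norm_pos_iff.mpr hn0) 2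
    linarith
  obtain ⟨t, ht, hPt⟩ := decrease_of_deriv_neg hL0d hneg
  rw [pgen_zero_eq_one hA1] at hPt
  exact ⟨_, by simpa using hPt⟩

lemma geom_gap {C : Set (V d)} (hC : IsOpenCone C) (αfun : V d → V d)
    (hα : ∀ v : V d, ‖v‖ = 1 → IsMaxOn' μ v (αfun v)) (hA1 : A1 μ)
    {u : V d} (hu : ‖u‖ = 1) (huC : u ∈ C) :
    ∃ δ : ℝ, 0 < δ ∧ ∀ v : V d, ‖v‖ = 1 → v ∉ C →
      δ ≤ ⟪αfun v, v⟫ - ⟪αfun u, v⟫ := by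
  set α := αfun u with hαdef
  have hαD : α ∈ Dset μ := (hα u hu).1
  have hmaxu : ∀ β ∈ Dset μ, ⟪β, u⟫ ≤ ⟪α, u⟫ := (hα u hu).2
  obtain ⟨R, hR0, hR⟩ := dset_bounded αfun hα
  set K := Metric.sphere (0 : V d) 1 ∩ Cᶜ with hK
  by_cases hKne : K.Nonempty
  · have hKcomp : IsCompact K :=
      (isCompact_sphere (0 : V d) 1).inter_right hC.1.isClosed_compl
    set g : V d → ℝ := fun v => ⟪αfun v, v⟫ - ⟪α, v⟫ with hg
    have hunit : ∀ v ∈ K, ‖v‖ = 1 := by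
      intro v hv
      have := hv.1
      rwa [mem_sphere_zero_iff_norm] at this
    have hlip : ∀ v ∈ K, ∀ w ∈ K, |g w - g v| ≤ (R + ‖α‖) * ‖w - v‖ := by
      have hkey : ∀ v ∈ K, ∀ w ∈ K, g w - g v ≤ (R + ‖α‖) * ‖w - v‖ := by
        intro v hv w hw
        have h1 : ⟪αfun w, v⟫ ≤ ⟪αfun v, v⟫ := (hα v (hunit v hv)).2 _ (hα w (hunit w hw)).1
        have h2 : g w - g v ≤ ⟪αfun w, w⟫ - ⟪αfun w, v⟫ - (⟪α, w⟫ - ⟪α, v⟫) := by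
          rw [hg]; simp only []; linarith
        have h3 : ⟪αfun w, w⟫ - ⟪αfun w, v⟫ = ⟪αfun w, w - v⟫ := by
          rw [inner_sub_right]
        have h4 : ⟪α, w⟫ - ⟪α, v⟫ = ⟪α, w - v⟫ := by rw [inner_sub_right]
        have h5 : ⟪αfun w, w - v⟫ ≤ R * ‖w - v‖ := by
          calc ⟪αfun w, w - v⟫ ≤ ‖αfun w‖ * ‖w - v‖ := real_inner_le_norm _ _
            _ ≤ R * ‖w - v‖ :=
                mul_le_mul_of_nonneg_right (hR _ (hα w (hunit w hw)).1) (norm_nonneg _)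
        have h6 : -(‖α‖ * ‖w - v‖) ≤ ⟪α, w - v⟫ := by
          have := real_inner_le_norm α (-(w - v))
          rw [inner_neg_right] at this
          rw [norm_neg] at this
          linarith
        rw [h3, h4] at h2
        calc g w - g v ≤ ⟪αfun w, w - v⟫ - ⟪α, w - v⟫ := h2
          _ ≤ R * ‖w - v‖ + ‖α‖ * ‖w - v‖ := by linarith
          _ = (R + ‖α‖) * ‖w - v‖ := by ring
      intro v hv w hw
      rw [abs_le]
      constructor
      · have := hkey w hw v hv
        have hnorm : ‖v - w‖ = ‖w - v‖ := by rw [← norm_neg]; congr 1; abel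
        rw [hnorm] at this
        linarith
      · exact hkey v hv w hw
    have hgcont : ContinuousOn g K := by
      rw [Metric.continuousOn_iff]
      intro v hv ε hε
      refine ⟨ε / (R + ‖α‖ + 1), by positivity, fun w hw hdist => ?_⟩
      rw [Real.dist_eq]
      calc |g w - g v| ≤ (R + ‖α‖) * ‖w - v‖ := hlip v hv w hw
        _ ≤ (R + ‖α‖ + 1) * ‖w - v‖ := by
            apply mul_le_mul_of_nonneg_right (by linarith) (norm_nonneg _)
        _ = (R + ‖α‖ + 1) * dist w v := by rw [dist_eq_norm]
        _ < (R + ‖α‖ + 1) * (ε / (R + ‖α‖ + 1)) := by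
            apply mul_lt_mul_of_pos_left hdist (by positivity)
        _ = ε := by field_simp
    obtain ⟨vmin, hvmin, hmin⟩ := hKcomp.exists_isMinOn hKne hgcont
    have hv1 : ‖vmin‖ = 1 := hunit vmin hvmin
    have hvC : vmin ∉ C := hvmin.2
    have hge : 0 ≤ g vmin := by
      rw [hg]
      simp only []
      have := (hα vmin hv1).2 α hαD
      linarith
    rcases lt_or_eq_of_le hge with hpos | heq
    · refine ⟨g vmin, hpos, fun v hv1' hvC' => ?_⟩
      exact isMinOn_iff.mp hmin v ⟨mem_sphere_zero_iff_norm.mpr hv1', hvC'⟩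
    · exfalso
      have hmaxv : ∀ β ∈ Dset μ, ⟪β, vmin⟫ ≤ ⟪α, vmin⟫ := by
        intro β hβ
        have h1 := (hα vmin hv1).2 β hβ
        have h2 : ⟪αfun vmin, vmin⟫ = ⟪α, vmin⟫ := by
          rw [hg] at heq; simp only [] at heq; linarith
        linarith
      have hL := pgen_hasFDerivAt hA1 α
      have hPα : Pgen μ α = 1 := pgen_at_max_eq_one hA1 hu hαD hmaxu
      have hL0 : pgenDeriv μ α ≠ 0 := by
        intro h
        obtain ⟨β0, hβ0⟩ := exists_pgen_lt_one hA1
        have hmin' := isMin_of_deriv_zero (pgen_convex hA1) (h ▸ hL) β0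
        linarith [hPα ▸ hmin']
      have huEq := max_dir_eq hA1 hL hPα hL0 hu hmaxu
      have hvEq := max_dir_eq hA1 hL hPα hL0 hv1 hmaxv
      have huv : u = vmin := huEq.trans hvEq.symm
      exact hvC (huv ▸ huC)
  · refine ⟨1, one_pos, fun v hv1 hvC => ?_⟩
    exfalso
    exact hKne ⟨v, mem_sphere_zero_iff_norm.mpr hv1, hvC⟩

end B6

end AuxStatement8

/-- under (A1), (A2), for u ∈ S^{d-1} ∩ C and k ∈ ℤ^d ∩ C the series
F_k converges absolutely on a multicircular neighborhood of r(u) = (e^{α₁(u)},…,e^{α_d(u)}). -/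
theorem statement8 {d : ℕ} (μ : Zd d → ℝ) (C : Set (V d)) (hA1 : A1 μ)
    (hC : IsOpenCone C) (hA2 : A2 μ C) (αfun : V d → V d)
    (hα : ∀ u : V d, ‖u‖ = 1 → IsMaxOn' μ u (αfun u))
    (u : V d) (hu : ‖u‖ = 1) (huC : u ∈ C) (k : Zd d) (hk : toV k ∈ C) :
    ∃ Vu : Set (Fin d → ℝ), IsOpen Vu ∧ (fun i => Real.exp (αfun u i)) ∈ Vu ∧
      ∀ x : Fin d → ℂ, (fun i => ‖x i‖) ∈ Vu →
        Summable (fun m : Zd d =>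
          if toV m ∉ C then
            exitTotal μ C k m * rpowZ (fun i => ‖x i‖) m
          else 0) := by
  classical
  have hd0 : 0 < d := by
    rcases Nat.eq_zero_or_pos d with h0 | h
    · exfalso
      subst h0
      have hzero : u = 0 := by ext i; exact Fin.elim0 i
      rw [hzero, norm_zero] at hu
      norm_num at hu
    · exact h
  have hdr : (0:ℝ) < (d:ℝ) := by exact_mod_cast hd0
  have hαD : αfun u ∈ Dset μ := (hα u hu).1
  obtain ⟨R, hR0, hR⟩ := dset_bounded αfun hα
  obtain ⟨δ, hδ0, hgap⟩ := geom_gap hC αfun hα hA1 hu huC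
  set α : V d := αfun u with hαdef
  set ε : ℝ := δ / (2 * (d + 1)) with hεdef
  have hε0 : 0 < ε := by positivity
  refine ⟨Set.pi Set.univ (fun i => Set.Ioo (Real.exp (α i - ε)) (Real.exp (α i + ε))),
    isOpen_set_pi Set.finite_univ (fun i _ => isOpen_Ioo), ?_, ?_⟩
  · intro i _
    exact ⟨Real.exp_lt_exp.mpr (by linarith), Real.exp_lt_exp.mpr (by linarith)⟩
  · intro x hx
    set r : Fin d → ℝ := fun i => ‖x i‖ with hrdef
    have hxi := fun i => hx i (Set.mem_univ i)
    have hrpos : ∀ i, 0 < r i := fun i => lt_trans (Real.exp_pos _) (hxi i).1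
    set γ : V d := WithLp.toLp 2 (fun i => Real.log (r i)) with hγdef
    have hγα : ∀ i, |γ i - α i| < ε := by
      intro i
      obtain ⟨h1, h2⟩ := hxi i
      have l1 : α i - ε < γ i := by
        have h3 := Real.log_lt_log (Real.exp_pos _) h1
        rwa [Real.log_exp] at h3
      have l2 : γ i < α i + ε := by
        have h3 := Real.log_lt_log (hrpos i) h2
        rwa [Real.log_exp] at h3
      rw [abs_lt]; exact ⟨by linarith, by linarith⟩
    have hγnorm : ‖γ - α‖ ≤ δ / 2 := by
      have h1 : ∀ i, |(γ - α) i| ≤ ε := by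
        intro i
        have h2 : (γ - α) i = γ i - α i := rfl
        rw [h2]; exact (hγα i).le
      calc ‖γ - α‖ ≤ ∑ i, |(γ - α) i| := norm_le_sum_abs _
        _ ≤ ∑ _i : Fin d, ε := Finset.sum_le_sum fun i _ => h1 i
        _ = (d:ℝ) * ε := by simp [Finset.sum_const, mul_comm]
        _ ≤ δ / 2 := by
            rw [hεdef]
            have key : (d:ℝ) * (δ / (2 * (d + 1))) = δ/2 * ((d:ℝ)/((d:ℝ)+1)) := by
              field_simp
            rw [key]
            have h3 : (d:ℝ)/((d:ℝ)+1) ≤ 1 := by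
              rw [div_le_one (by positivity)]; linarith
            nlinarith
    have hrpow : ∀ m : Zd d, rpowZ r m = Real.exp (dotZ γ m) := by
      intro m
      rw [rpowZ, dotZ, Real.exp_sum]
      apply Finset.prod_congr rfl
      intro i _
      have hre : r i = Real.exp (γ i) := (Real.exp_log (hrpos i)).symm
      rw [hre, ← Real.rpow_intCast (Real.exp (γ i)) (m i),
        Real.rpow_def_of_pos (Real.exp_pos _), Real.log_exp]
    set δ'' : ℝ := δ / (2 * d) with hδ''def
    have hδ''0 : 0 < δ'' := by positivity
    have hprod : Summable (fun m : Zd d => ∏ i, Real.exp (-δ'' * |((m i) : ℝ)|)) :=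
      summable_pi_prod _ (fun z => Real.exp_nonneg _) (summable_exp_abs hδ''0) d
    set Bc : ℝ := Real.exp (R * ‖toV k‖) with hBc
    have h0 := hA1.1.1
    refine Summable.of_nonneg_of_le ?_ ?_ (hprod.mul_left Bc)
    · intro m
      by_cases hmC : toV m ∉ C
      · rw [if_pos hmC, hrpow m]
        exact mul_nonneg (exitTotal_nonneg h0 m) (Real.exp_nonneg _)
      · rw [if_neg hmC]
    · intro m
      by_cases hmC : toV m ∉ C
      swap
      · rw [if_neg hmC]
        exact mul_nonneg (Real.exp_nonneg _)
          (Finset.prod_nonneg fun i _ => Real.exp_nonneg _)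
      · rw [if_pos hmC, hrpow m]
        by_cases hm0 : m = 0
        · subst hm0
          have hmain := (exitTotal_mul_exp_le hA1 hk hαD (0 : Zd d)).2
          have hz : dotZ γ (0 : Zd d) = 0 := by simp [dotZ]
          have hz2 : dotZ α (0 : Zd d) = 0 := by simp [dotZ]
          rw [hz2, Real.exp_zero, mul_one] at hmain
          rw [hz, Real.exp_zero, mul_one]
          have hbk : Real.exp (dotZ α k) ≤ Bc := by
            rw [hBc]
            apply Real.exp_le_exp.mpr
            rw [dotZ_eq_inner]
            calc ⟪α, toV k⟫ ≤ ‖α‖ * ‖toV k‖ := real_inner_le_norm _ _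
              _ ≤ R * ‖toV k‖ := mul_le_mul_of_nonneg_right (hR α hαD) (norm_nonneg _)
          have hone : (∏ i, Real.exp (-δ'' * |(((0 : Zd d) i) : ℝ)|)) = 1 := by
            simp
          rw [hone, mul_one]
          linarith [hmain, hbk]
        · have htm0 : toV m ≠ 0 := fun h => hm0 ((toV_eq_zero_iff m).mp h)
          set tm : V d := toV m with htm
          have htmpos : 0 < ‖tm‖ := norm_pos_iff.mpr htm0
          set v : V d := ‖tm‖⁻¹ • tm with hvdef
          have hv1 : ‖v‖ = 1 := norm_smul_inv_norm htm0
          have hsm : tm = ‖tm‖ • v := by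
            rw [hvdef, smul_smul, mul_inv_cancel₀ (ne_of_gt htmpos), one_smul]
          have hvC : v ∉ C := by
            intro hvC'
            have h2 := hC.2 v hvC' ‖tm‖ htmpos
            rw [← hsm] at h2
            exact hmC h2
          have hgapv := hgap v hv1 hvC
          set β : V d := αfun v with hβdef
          have hβD : β ∈ Dset μ := (hα v hv1).1
          have hmain := (exitTotal_mul_exp_le hA1 hk hβD m).2
          have hsplit : dotZ γ m = dotZ β m + dotZ (γ - β) m := by
            rw [dotZ_sub_left]; ring
          have hbk : Real.exp (dotZ β k) ≤ Bc := by
            rw [hBc]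
            apply Real.exp_le_exp.mpr
            rw [dotZ_eq_inner]
            calc ⟪β, toV k⟫ ≤ ‖β‖ * ‖toV k‖ := real_inner_le_norm _ _
              _ ≤ R * ‖toV k‖ := mul_le_mul_of_nonneg_right (hR β hβD) (norm_nonneg _)
          have hexp2 : dotZ (γ - β) m ≤ -δ'' * Nl m := by
            have e1 : dotZ (γ - β) m = ⟪γ - α, tm⟫ - ⟪β - α, tm⟫ := by
              rw [dotZ_eq_inner, htm]
              simp only [inner_sub_left]
              ring
            have e2 : ⟪γ - α, tm⟫ ≤ (δ/2) * ‖tm‖ := by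
              calc ⟪γ - α, tm⟫ ≤ ‖γ - α‖ * ‖tm‖ := real_inner_le_norm _ _
                _ ≤ (δ/2) * ‖tm‖ := mul_le_mul_of_nonneg_right hγnorm (norm_nonneg _)
            have e3 : δ * ‖tm‖ ≤ ⟪β - α, tm⟫ := by
              have e4 : ⟪β - α, tm⟫ = ‖tm‖ * ⟪β - α, v⟫ := by
                conv_lhs => rw [hsm]
                rw [real_inner_smul_right]
              have e5 : δ ≤ ⟪β - α, v⟫ := by
                rw [inner_sub_left]
                exact hgapv
              calc δ * ‖tm‖ = ‖tm‖ * δ := by ring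
                _ ≤ ‖tm‖ * ⟪β - α, v⟫ := mul_le_mul_of_nonneg_left e5 htmpos.le
                _ = ⟪β - α, tm⟫ := e4.symm
            have e6 : Nl m ≤ (d:ℝ) * ‖tm‖ := by
              have := Nl_le_d_norm m
              rwa [← htm] at this
            have e7 : δ'' * ((d:ℝ) * ‖tm‖) = (δ/2) * ‖tm‖ := by
              rw [hδ''def]; field_simp
            have e8 : δ'' * Nl m ≤ (δ/2) * ‖tm‖ := by
              calc δ'' * Nl m ≤ δ'' * ((d:ℝ) * ‖tm‖) :=
                    mul_le_mul_of_nonneg_left e6 hδ''0.le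
                _ = (δ/2) * ‖tm‖ := e7
            rw [e1]
            nlinarith [e2, e3, e8]
          have hexp3 : Real.exp (dotZ (γ - β) m)
              ≤ ∏ i, Real.exp (-δ'' * |((m i):ℝ)|) := by
            rw [← Real.exp_sum]
            apply Real.exp_le_exp.mpr
            have hsum : (∑ i, -δ'' * |((m i):ℝ)|) = -δ'' * Nl m := by
              rw [Nl, Finset.mul_sum]
            rw [hsum]
            exact hexp2
          calc exitTotal μ C k m * Real.exp (dotZ γ m)
              = (exitTotal μ C k m * Real.exp (dotZ β m)) * Real.exp (dotZ (γ - β) m) := by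
                rw [hsplit, Real.exp_add]; ring
            _ ≤ Bc * ∏ i, Real.exp (-δ'' * |((m i):ℝ)|) :=
                mul_le_mul (le_trans hmain hbk) hexp3 (Real.exp_nonneg _)
                  (Real.exp_nonneg _)
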